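/- Let t < 0 and set z_* = −1/(1−t). Then γ_t(z) = (z−z_*) − (z−z_*)^{1−t}/(1−t) + o((z−z_*)^{1−t}) as z → z_* from above; equivalently, lim_{z→z_*+} [γ_t(z) − (z−z_*) + (z−z_*)^{1−t}/(1−t)] / (z−z_*)^{1−t} = 0. -/

import Mathlib

set_option maxHeartbeats 1000000

open ENNReal Filter Topology

/-- The `t`-exponential function, with values in `[0,∞]`. -/
noncomputable def qexpE (t z : ℝ) : ℝ≥0∞ :=
  if t = 1 then ENNReal.ofReal (Real.exp z)
  else (ENNReal.ofReal (1 + (1 - t) * z)) ^ (1 / (1 - t))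

lemma ofReal_max' (x : ℝ) : ENNReal.ofReal x = ENNReal.ofReal (max x 0) := by
  rcases le_total 0 x with h | h
  · rw [max_eq_left h]
  · rw [max_eq_right h, ENNReal.ofReal_of_nonpos h]; simp

lemma gamma_key (t : ℝ) (ht : t < 0) (γ : ℝ → ℝ)
    (hγ : ∀ z : ℝ, qexpE t (z - γ z) + qexpE t (-(γ z)) = 1)
    (z : ℝ) (hz1 : -1/(1-t) < z) (hz2 : z < 0) :
    0 < γ z ∧ γ z < z + 1/(1-t) ∧
    0 ≤ 1 - (1 - (1-t)*γ z) ^ (1/(1-t)) ∧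
    (z + 1/(1-t)) - γ z = (1 - (1 - (1-t)*γ z) ^ (1/(1-t))) ^ (1-t) / (1-t) ∧
    (z + 1/(1-t)) - γ z ≤ ((1-t)*(z + 1/(1-t))) ^ (1-t) / (1-t) := by
  set s : ℝ := 1 - t with hs
  have hs1 : 1 < s := by rw [hs]; linarith
  have hs0 : 0 < s := by linarith
  have hα : 0 < 1/s := by positivity
  have hα1 : 1/s < 1 := by rw [div_lt_one hs0]; exact hs1
  have ht1 : t ≠ 1 := by linarith
  set g : ℝ := γ z with hg
  set ε : ℝ := z + 1/s with hε
  have hz1' : -(1/s) < z := by rw [neg_div] at hz1; exact hz1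
  have hε0 : 0 < ε := by rw [hε]; linarith
  have hεs : ε < 1/s := by rw [hε]; linarith
  set A : ℝ := 1 + s * (z - g) with hA
  set B : ℝ := 1 - s * g with hB
  have hAe : A = s * (ε - g) := by
    have : s * (1/s) = 1 := by field_simp
    rw [hA, hε]; nlinarith [this]
  have heq : max A 0 ^ (1/s) + max B 0 ^ (1/s) = 1 := by
    have h := hγ z
    rw [qexpE, qexpE, if_neg ht1, if_neg ht1] at h
    have eA : 1 + (1-t)*(z - γ z) = A := by rw [hA]
    have eB : 1 + (1-t)*(-(γ z)) = B := by rw [hB]; ring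
    rw [eA, eB, ofReal_max' A, ofReal_max' B,
      ENNReal.ofReal_rpow_of_nonneg (le_max_right _ _) hα.le,
      ENNReal.ofReal_rpow_of_nonneg (le_max_right _ _) hα.le,
      ← ENNReal.ofReal_add (Real.rpow_nonneg (le_max_right _ _) _)
        (Real.rpow_nonneg (le_max_right _ _) _)] at h
    exact ENNReal.ofReal_eq_one.mp h
  have hg_lt : g < ε := by
    by_contra hcon
    push_neg at hcon
    have hA0 : A ≤ 0 := by rw [hAe]; nlinarith
    rw [max_eq_right hA0, Real.zero_rpow (ne_of_gt hα), zero_add] at heq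
    have hmB : max B 0 = 1 := by
      have h2 : (max B 0 ^ (1/s)) ^ s = (1:ℝ) ^ s := by rw [heq]
      rwa [← Real.rpow_mul (le_max_right _ _), one_div_mul_cancel (ne_of_gt hs0),
        Real.rpow_one, Real.one_rpow] at h2
    have hB1 : B = 1 := by
      rcases le_total B 0 with h | h
      · rw [max_eq_right h] at hmB; norm_num at hmB
      · rwa [max_eq_left h] at hmB
    have : g = 0 := by
      have : s * g = 0 := by rw [hB] at hB1; linarith
      exact (mul_eq_zero.mp this).resolve_left (ne_of_gt hs0)
    rw [this] at hcon
    linarith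
  have hg_pos : 0 < g := by
    by_contra hcon
    push_neg at hcon
    have hB1 : 1 ≤ B := by rw [hB]; nlinarith
    have h1 : 1 ≤ max B 0 ^ (1/s) := Real.one_le_rpow (le_max_of_le_left hB1) hα.le
    have hApos : 0 < A := by rw [hAe]; nlinarith
    have h2 : 0 < max A 0 ^ (1/s) :=
      Real.rpow_pos_of_pos (lt_max_of_lt_left hApos) _
    linarith
  have hApos : 0 < A := by rw [hAe]; nlinarith
  have hsε1 : s * ε < 1 := by
    have h1 : s * ε < s * (1/s) := mul_lt_mul_of_pos_left hεs hs0
    rwa [mul_one_div, div_self (ne_of_gt hs0)] at h1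
  have hsg : s * g < s * ε := mul_lt_mul_of_pos_left hg_lt hs0
  have hB0 : 0 < B := by rw [hB]; linarith
  have hBlt1 : B < 1 := by rw [hB]; nlinarith
  rw [max_eq_left hApos.le, max_eq_left hB0.le] at heq
  have hBα1 : B ^ (1/s) < 1 := Real.rpow_lt_one hB0.le hBlt1 hα
  have hG0 : 0 ≤ 1 - B ^ (1/s) := by linarith
  have hAα : A ^ (1/s) = 1 - B ^ (1/s) := by linarith
  have hAeq : A = (1 - B ^ (1/s)) ^ s := by
    have : A = (A ^ (1/s)) ^ s := by
      rw [← Real.rpow_mul hApos.le, one_div_mul_cancel (ne_of_gt hs0), Real.rpow_one]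
    rw [this, hAα]
  have hmain : ε - g = (1 - B ^ (1/s)) ^ s / s := by
    rw [eq_div_iff (ne_of_gt hs0), ← hAeq, hAe]; ring
  have hBmono : B ^ (1:ℝ) ≤ B ^ (1/s) :=
    Real.rpow_le_rpow_of_exponent_ge hB0 hBlt1.le hα1.le
  rw [Real.rpow_one] at hBmono
  have hGle : 1 - B ^ (1/s) ≤ s * ε := by
    have h1 : 1 - B = s * g := by rw [hB]; ring
    calc 1 - B ^ (1/s) ≤ 1 - B := by linarith
    _ = s * g := h1
    _ ≤ s * ε := hsg.le
  have hbound : ε - g ≤ (s * ε) ^ s / s := by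
    rw [hmain]
    have := Real.rpow_le_rpow hG0 hGle hs0.le
    gcongr
  exact ⟨hg_pos, hg_lt, hG0, hmain, hbound⟩

noncomputable def Gfun (s x : ℝ) : ℝ := 1 - (1 - s*x) ^ (1/s)

lemma Gfun_slope (s : ℝ) (hs : 1 < s) :
    Tendsto (fun x => Gfun s x / x) (𝓝[>] (0:ℝ)) (𝓝 1) := by
  have hs0 : 0 < s := lt_trans one_pos hs
  have hinner : HasDerivAt (fun x : ℝ => 1 - s * x) (-(s * 1)) 0 :=
    ((hasDerivAt_id (0:ℝ)).const_mul s).const_sub 1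
  have houter : HasDerivAt (fun y : ℝ => y ^ (1/s)) (1/s * (1:ℝ) ^ (1/s - 1))
      ((fun x : ℝ => 1 - s * x) 0) := by
    simpa using Real.hasDerivAt_rpow_const (x := (1:ℝ)) (p := 1/s) (Or.inl one_ne_zero)
  have hcomp := (HasDerivAt.comp 0 houter hinner).const_sub 1
  have hG : HasDerivAt (Gfun s) 1 0 := by
    have h1 : -(1/s * (1:ℝ) ^ (1/s - 1) * -(s * 1)) = 1 := by
      rw [Real.one_rpow]; field_simp
    rw [← h1]
    exact hcomp
  have hslope := hasDerivAt_iff_tendsto_slope.mp hG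
  have hmono : Tendsto (slope (Gfun s) 0) (𝓝[>] (0:ℝ)) (𝓝 1) :=
    hslope.mono_left (nhdsWithin_mono _ fun x hx => by
      simp only [Set.mem_compl_iff, Set.mem_singleton_iff]
      exact ne_of_gt hx)
  refine hmono.congr fun x => ?_
  rw [slope_def_field]
  simp [Gfun]

/-- let `t < 0` and `z_* = -1/(1-t)`.  Then
`γ_t(z) = (z-z_*) - (z-z_*)^{1-t}/(1-t) + o((z-z_*)^{1-t})` as `z → z_*+`;
equivalently
`lim_{z→z_*+} [γ_t(z) - (z-z_*) + (z-z_*)^{1-t}/(1-t)] / (z-z_*)^{1-t} = 0`. -/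
theorem t_logistic_gamma_expansion_t_neg (t : ℝ) (ht : t < 0) (γ : ℝ → ℝ)
    (hγ : ∀ z : ℝ, qexpE t (z - γ z) + qexpE t (-(γ z)) = 1) :
    Tendsto
      (fun z : ℝ =>
        (γ z - (z - (-1 / (1 - t))) + (z - (-1 / (1 - t))) ^ (1 - t) / (1 - t)) /
          (z - (-1 / (1 - t))) ^ (1 - t))
      (𝓝[>] (-1 / (1 - t))) (𝓝 0) := by
  set s : ℝ := 1 - t with hs
  clear_value s
  have hs1 : 1 < s := by rw [hs]; linarith
  have hs0 : 0 < s := by linarith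
  have h1s : 0 < 1/s := by positivity
  have hsum : -1/s + 1/s = 0 := by ring
  have hzs : -1/s < 0 := by linarith
  have hkey : ∀ᶠ z in 𝓝[>] (-1/s), 0 < γ z ∧ γ z < z + 1/s ∧ 0 ≤ Gfun s (γ z) ∧
      (z + 1/s) - γ z = (Gfun s (γ z)) ^ s / s ∧
      (z + 1/s) - γ z ≤ (s * (z + 1/s)) ^ s / s := by
    filter_upwards [self_mem_nhdsWithin,
      Ioo_mem_nhdsGT_of_mem (Set.mem_Ico.mpr ⟨le_refl (-1/s), hzs⟩)] with z hz1 hz2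
    have h := gamma_key t ht γ hγ z (by rw [← hs]; exact hz1) hz2.2
    rw [← hs] at h
    simpa [Gfun] using h
  have hE : Tendsto (fun z : ℝ => z + 1/s) (𝓝[>] (-1/s)) (𝓝 0) := by
    have h1 : Tendsto (fun z : ℝ => z + 1/s) (𝓝 (-1/s)) (𝓝 (-1/s + 1/s)) :=
      (continuous_id.add continuous_const).tendsto _
    rw [hsum] at h1
    exact h1.mono_left nhdsWithin_le_nhds
  have L1 : Tendsto γ (𝓝[>] (-1/s)) (𝓝[>] (0:ℝ)) := by
    apply tendsto_nhdsWithin_of_tendsto_nhds_of_eventually_within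
    · exact squeeze_zero' (hkey.mono fun z h => h.1.le) (hkey.mono fun z h => h.2.1.le) hE
    · exact hkey.mono fun z h => h.1
  have L3 : Tendsto (fun z => Gfun s (γ z) / γ z) (𝓝[>] (-1/s)) (𝓝 1) :=
    (Gfun_slope s hs1).comp L1
  have Llow : Tendsto (fun z : ℝ => 1 - (s*(z + 1/s)) ^ (s-1)) (𝓝[>] (-1/s)) (𝓝 1) := by
    have hc : Tendsto (fun z : ℝ => s * (z + 1/s)) (𝓝[>] (-1/s)) (𝓝 0) := by
      simpa using hE.const_mul s
    have hr : Tendsto (fun x : ℝ => x ^ (s-1)) (𝓝 0) (𝓝 ((0:ℝ) ^ (s-1))) :=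
      (Real.continuousAt_rpow_const 0 (s-1) (Or.inr (by linarith))).tendsto
    rw [Real.zero_rpow (by linarith : (0:ℝ) < s - 1).ne'] at hr
    have h2 := hr.comp hc
    have h3 := tendsto_const_nhds (x := (1:ℝ)) (f := 𝓝[>] (-1/s)) |>.sub h2
    simpa using h3
  have L4 : Tendsto (fun z => γ z / (z + 1/s)) (𝓝[>] (-1/s)) (𝓝 1) := by
    apply tendsto_of_tendsto_of_tendsto_of_le_of_le' Llow tendsto_const_nhds
    · filter_upwards [hkey, self_mem_nhdsWithin] with z h hz
      have hz' : -1/s < z := hz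
      have hE0 : 0 < z + 1/s := by linarith
      have hsE : 0 < s * (z + 1/s) := by positivity
      rw [le_div_iff₀ hE0]
      have hpow : (s*(z + 1/s)) ^ (s-1) * (z + 1/s) = (s*(z + 1/s)) ^ s / s := by
        rw [Real.rpow_sub hsE, Real.rpow_one, div_mul_eq_mul_div,
          mul_comm ((s*(z + 1/s)) ^ s) (z + 1/s), mul_comm s (z + 1/s),
          mul_div_mul_left _ _ hE0.ne']
      have hexp : (1 - (s*(z + 1/s)) ^ (s-1)) * (z + 1/s)
          = (z + 1/s) - (s*(z + 1/s)) ^ (s-1) * (z + 1/s) := by ring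
      rw [hexp, hpow]
      linarith [h.2.2.2.2]
    · filter_upwards [hkey, self_mem_nhdsWithin] with z h hz
      have hz' : -1/s < z := hz
      have hE0 : 0 < z + 1/s := by linarith
      exact (div_le_one hE0).mpr h.2.1.le
  have L5 : Tendsto (fun z => Gfun s (γ z) / (z + 1/s)) (𝓝[>] (-1/s)) (𝓝 1) := by
    have h1 := L3.mul L4
    rw [mul_one] at h1
    refine Tendsto.congr' ?_ h1
    filter_upwards [hkey] with z h
    have hγ0 : γ z ≠ 0 := ne_of_gt h.1
    rw [div_mul_div_comm, mul_comm (Gfun s (γ z)) (γ z), mul_div_mul_left _ _ hγ0]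
  have L6 : Tendsto (fun z => (Gfun s (γ z) / (z + 1/s)) ^ s) (𝓝[>] (-1/s)) (𝓝 1) := by
    have hc := (Real.continuousAt_rpow_const 1 s (Or.inl one_ne_zero)).tendsto
    have h2 := hc.comp L5
    simpa [Real.one_rpow, Function.comp_def] using h2
  have Lfin : Tendsto (fun z => 1/s - 1/s * (Gfun s (γ z) / (z + 1/s)) ^ s)
      (𝓝[>] (-1/s)) (𝓝 0) := by
    have h2 := tendsto_const_nhds (x := 1/s) (f := 𝓝[>] (-1/s)) |>.sub (L6.const_mul (1/s))
    simpa using h2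
  refine Tendsto.congr' ?_ Lfin
  filter_upwards [hkey, self_mem_nhdsWithin] with z h hz
  obtain ⟨h1, h2, h3, h4, h5⟩ := h
  have hz' : -1/s < z := hz
  have hE0 : 0 < z + 1/s := by linarith
  have hEs : (0:ℝ) < (z + 1/s) ^ s := Real.rpow_pos_of_pos hE0 s
  have hzz : z - -1/s = z + 1/s := by ring
  rw [hzz, Real.div_rpow h3 hE0.le]
  have hγE : γ z - (z + 1/s) = -(Gfun s (γ z) ^ s / s) := by linarith
  rw [hγE]
  set X := Gfun s (γ z) ^ s with hX
  set Y := (z + 1/s) ^ s with hY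
  clear_value X Y
  field_simp
  ring
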